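/- (Brylawski–Lucas) Let [I_r | D1] over a field F represent a matroid M, let G(D1^#) be the associated bipartite graph, and let {b1,...,bk} be the edge set of a spanning forest of G(D1^#) (a basis of its cycle matroid). Then for every k-tuple (θ1,...,θk) of nonzero elements of F, there is a matrix [I_r | D2] obtained from [I_r | D1] by a sequence of row and column scalings by nonzero elements of F such that for each i, the entry of D2 in the position corresponding to bi equals θi. -/

import Mathlib

open Set

namespace BLaux

variable {r s : ℕ}

private def fe (p : Fin r × Fin s) : Sym2 (Fin r ⊕ Fin s) := s(Sum.inl p.1, Sum.inr p.2)

lemma fe_inj : Function.Injective (fe (r := r) (s := s)) := by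
  rintro ⟨a, b⟩ ⟨c, d⟩ h
  simp only [fe, Sym2.eq, Sym2.rel_iff', Prod.mk.injEq, Prod.swap_prod_mk] at h
  rcases h with ⟨h1, h2⟩ | ⟨h1, h2⟩
  · simp only [Sum.inl.injEq, Sum.inr.injEq] at h1 h2
    simp [h1, h2]
  · exact absurd h1 (by simp)

lemma acyclic_mono {V : Type*} {G H : SimpleGraph V} (hle : G ≤ H) (hH : H.IsAcyclic) :
    G.IsAcyclic := fun _ c hc => hH (c.mapLe hle) (hc.mapLe hle)

/-- Leaf existence in an acyclic set of positions. -/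
lemma exists_leaf {k : ℕ} (hk : k ≠ 0) (b : Fin k → Fin r × Fin s)
    (hb : Function.Injective b)
    (hG : (SimpleGraph.fromEdgeSet (fe '' Set.range b)).IsAcyclic) :
    ∃ l, (∀ l', l' ≠ l → (b l').1 ≠ (b l).1) ∨ (∀ l', l' ≠ l → (b l').2 ≠ (b l).2) := by
  classical
  by_contra hcon
  push_neg at hcon
  set G := SimpleGraph.fromEdgeSet (fe '' Set.range b) with hGdef
  -- from any path we can extend at the head, else we build a cycle
  have key : ∀ m : ℕ, ∃ (u v : Fin r ⊕ Fin s) (p : G.Walk v u), p.IsPath ∧ p.length = m + 1 := by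
    intro m
    induction m with
    | zero =>
      obtain ⟨l⟩ : Nonempty (Fin k) := ⟨⟨0, Nat.pos_of_ne_zero hk⟩⟩
      have hadj : G.Adj (Sum.inl (b l).1) (Sum.inr (b l).2) := by
        rw [hGdef, SimpleGraph.fromEdgeSet_adj]
        exact ⟨⟨b l, ⟨l, rfl⟩, rfl⟩, by simp⟩
      exact ⟨_, _, (SimpleGraph.Path.singleton hadj).1, (SimpleGraph.Path.singleton hadj).2,
        by simp [SimpleGraph.Path.singleton]⟩
    | succ m ih =>
      obtain ⟨u, v, p, hp, hlen⟩ := ih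
      -- p is not nil, so it starts with an edge
      cases p with
      | nil => simp at hlen
      | @cons _ x _ h q =>
        have h2 := h
        rw [hGdef, SimpleGraph.fromEdgeSet_adj] at h2
        have hmem : s(v, x) ∈ fe '' Set.range b := h2.1
        obtain ⟨pp, ⟨l, rfl⟩, hfl⟩ := hmem
        -- find a fresh edge at v
        have hswap : (Sum.inl (b l).1 = v ∧ Sum.inr (b l).2 = x) ∨
            (Sum.inl (b l).1 = x ∧ Sum.inr (b l).2 = v) := by
          rw [fe, Sym2.eq_iff] at hfl; exact hfl
        -- in either case, get l' ≠ l sharing the v-endpoint, and define w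
        obtain ⟨l', hl', w, hvemem, hwynev⟩ :
            ∃ l', l' ≠ l ∧ ∃ w : Fin r ⊕ Fin s, s(w, v) = fe (b l') ∧ w ≠ v := by
          rcases hswap with ⟨h1, h2⟩ | ⟨h1, h2⟩
          · obtain ⟨l', hne, heq⟩ := (hcon l).1
            exact ⟨l', hne, Sum.inr (b l').2, by
              rw [fe, ← h1, heq, Sym2.eq_swap], by rw [← h1]; simp⟩
          · obtain ⟨l', hne, heq⟩ := (hcon l).2
            exact ⟨l', hne, Sum.inl (b l').1, by
              rw [fe, ← h2, heq], by rw [← h2]; simp⟩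
        have hadjwv : G.Adj w v := by
          rw [hGdef, SimpleGraph.fromEdgeSet_adj]
          exact ⟨by rw [hvemem]; exact ⟨b l', ⟨l', rfl⟩, rfl⟩, hwynev⟩
        have hedne : s(w, v) ≠ s(v, x) := by
          rw [hvemem, ← hfl]
          exact fun hh => hl' (hb (fe_inj hh))
        rcases Classical.em (w ∈ (SimpleGraph.Walk.cons h q).support) with hw | hw
        · -- build a cycle: contradiction
          exfalso
          have hq' := hp.takeUntil hw
          refine hG (SimpleGraph.Walk.cons hadjwv ((SimpleGraph.Walk.cons h q).takeUntil w hw)) ?_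
          rw [SimpleGraph.Walk.cons_isCycle_iff]
          refine ⟨hq', fun hmem' => ?_⟩
          have hmem'' : s(w, v) ∈ (SimpleGraph.Walk.cons h q).edges :=
            SimpleGraph.Walk.edges_takeUntil_subset _ hw hmem'
          rw [SimpleGraph.Walk.edges_cons, List.mem_cons] at hmem''
          rcases hmem'' with hmem'' | hmem''
          · exact hedne hmem''
          · have : v ∈ q.support := q.snd_mem_support_of_mem_edges hmem''
            exact ((SimpleGraph.Walk.cons_isPath_iff _ _).1 hp).2 this
        · -- extend the path
          refine ⟨u, w, SimpleGraph.Walk.cons hadjwv (SimpleGraph.Walk.cons h q), ?_, ?_⟩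
          · exact (SimpleGraph.Walk.cons_isPath_iff _ _).2 ⟨hp, hw⟩
          · simp only [SimpleGraph.Walk.length_cons] at hlen ⊢
            omega
  obtain ⟨u, v, p, hp, hlen⟩ := key (Fintype.card (Fin r ⊕ Fin s))
  have := hp.length_lt
  omega

lemma main {F : Type*} [Field F] :
    ∀ {k : ℕ} (b : Fin k → Fin r × Fin s), Function.Injective b →
    (SimpleGraph.fromEdgeSet (fe '' Set.range b)).IsAcyclic →
    ∀ (c : Fin k → F), (∀ l, c l ≠ 0) →
    ∃ (ρ : Fin r → F) (γ : Fin s → F),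
      (∀ i, ρ i ≠ 0) ∧ (∀ j, γ j ≠ 0) ∧ ∀ l, ρ (b l).1 * γ (b l).2 = c l := by
  intro k
  induction k with
  | zero =>
    intro b _ _ c _
    exact ⟨fun _ => 1, fun _ => 1, fun _ => one_ne_zero, fun _ => one_ne_zero,
      fun l => l.elim0⟩
  | succ k ih =>
    intro b hb hG c hc
    obtain ⟨l₀, hleaf⟩ := exists_leaf (Nat.succ_ne_zero k) b hb hG
    set b' : Fin k → Fin r × Fin s := fun m => b (l₀.succAbove m) with hb'def
    have hb' : Function.Injective b' := hb.comp (Fin.succAbove_right_injective)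
    have hsub : Set.range b' ⊆ Set.range b := by
      rintro _ ⟨m, rfl⟩; exact ⟨l₀.succAbove m, rfl⟩
    have hG' : (SimpleGraph.fromEdgeSet (fe '' Set.range b')).IsAcyclic :=
      acyclic_mono (SimpleGraph.fromEdgeSet_mono (Set.image_mono hsub)) hG
    obtain ⟨ρ, γ, hρ, hγ, heq⟩ := ih b' hb' hG' (fun m => c (l₀.succAbove m))
      (fun m => hc _)
    rcases hleaf with hrow | hcol
    · refine ⟨fun i => if i = (b l₀).1 then c l₀ * (γ (b l₀).2)⁻¹ else ρ i, γ, ?_, hγ, ?_⟩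
      · intro i
        by_cases hi : i = (b l₀).1 <;>
          simp [hi, hc, hρ, inv_ne_zero (hγ (b l₀).2)]
      · intro l
        by_cases hl : l = l₀
        · subst hl
          beta_reduce
          rw [if_pos rfl]
          exact inv_mul_cancel_right₀ (hγ _) _
        · obtain ⟨m, rfl⟩ := Fin.exists_succAbove_eq hl
          simp only [if_neg (hrow _ hl)]
          exact heq m
    · refine ⟨ρ, fun j => if j = (b l₀).2 then c l₀ * (ρ (b l₀).1)⁻¹ else γ j, hρ, ?_, ?_⟩
      · intro j
        by_cases hj : j = (b l₀).2 <;>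
          simp [hj, hc, hγ, inv_ne_zero (hρ (b l₀).1)]
      · intro l
        by_cases hl : l = l₀
        · subst hl
          beta_reduce
          rw [if_pos rfl]
          rw [mul_left_comm, mul_inv_cancel₀ (hρ _), mul_one]
        · obtain ⟨m, rfl⟩ := Fin.exists_succAbove_eq hl
          simp only [if_neg (hcol _ hl)]
          exact heq m

end BLaux

theorem brylawski_lucas
    {F : Type*} [Field F] {r s k : ℕ} (D₁ : Matrix (Fin r) (Fin s) F)
    (b : Fin k → Fin r × Fin s) (hb : Function.Injective b)
    (hforest : Maximal (fun t : Set (Fin r × Fin s) =>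
        (∀ p ∈ t, D₁ p.1 p.2 ≠ 0) ∧
        (SimpleGraph.fromEdgeSet
          ((fun p : Fin r × Fin s => s(Sum.inl p.1, Sum.inr p.2)) '' t :
            Set (Sym2 (Fin r ⊕ Fin s)))).IsAcyclic)
      (Set.range b))
    (θ : Fin k → F) (hθ : ∀ l, θ l ≠ 0) :
    ∃ (ρ : Fin r → F) (γ : Fin s → F),
      (∀ i, ρ i ≠ 0) ∧ (∀ j, γ j ≠ 0) ∧
      ∀ l, ρ (b l).1 * D₁ (b l).1 (b l).2 * γ (b l).2 = θ l := by
  have hD : ∀ l, D₁ (b l).1 (b l).2 ≠ 0 := fun l => hforest.1.1 _ ⟨l, rfl⟩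
  have hG : (SimpleGraph.fromEdgeSet (BLaux.fe '' Set.range b)).IsAcyclic := hforest.1.2
  obtain ⟨ρ, γ, hρ, hγ, heq⟩ := BLaux.main b hb hG
    (fun l => θ l * (D₁ (b l).1 (b l).2)⁻¹)
    (fun l => mul_ne_zero (hθ l) (inv_ne_zero (hD l)))
  refine ⟨ρ, γ, hρ, hγ, fun l => ?_⟩
  have h2 : ρ (b l).1 * γ (b l).2 * D₁ (b l).1 (b l).2 = θ l := by
    rw [heq l, mul_assoc, inv_mul_cancel₀ (hD l), mul_one]
  linear_combination h2
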